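/- Let μ be a real (signed) Borel measure on an interval [a,b] with μ([a,b]) > 0. Then μ is a Steffensen-Popoviciu measure (i.e., ∫_a^b f dμ ≥ 0 for every continuous convex function f : [a,b] → [0,∞)) if and only if ∫_a^t (t − x) dμ(x) ≥ 0 and ∫_t^b (x − t) dμ(x) ≥ 0 for every t ∈ [a,b]. -/

import Mathlib

open MeasureTheory

open MeasureTheory Set

lemma convexOn_maxSub {s : Set ℝ} (hs : Convex ℝ s) (t : ℝ) :
    ConvexOn ℝ s (fun x => max (t - x) 0) := by
  have h1 : ConvexOn ℝ s (fun x => t - x) := by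
    refine ⟨hs, fun x _ y _ p q hp hq hpq => le_of_eq ?_⟩
    simp only [smul_eq_mul]
    linear_combination (-t) * hpq
  have := h1.sup (convexOn_const 0 hs)
  simpa [Pi.sup_def] using this

lemma convexOn_subMax {s : Set ℝ} (hs : Convex ℝ s) (t : ℝ) :
    ConvexOn ℝ s (fun x => max (x - t) 0) := by
  have h1 : ConvexOn ℝ s (fun x => x - t) := by
    refine ⟨hs, fun x _ y _ p q hp hq hpq => le_of_eq ?_⟩
    simp only [smul_eq_mul]
    linear_combination t * hpq
  have := h1.sup (convexOn_const 0 hs)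
  simpa [Pi.sup_def] using this

lemma intOn {f : ℝ → ℝ} (hf : Continuous f) (μ : Measure ℝ) [IsFiniteMeasure μ] (s : Set ℝ)
    (hs : IsCompact s) : IntegrableOn f s μ :=
  hf.continuousOn.integrableOn_compact hs

lemma intA (μ : Measure ℝ) [IsFiniteMeasure μ] {a b t : ℝ} (h1 : a ≤ t) (h2 : t ≤ b) :
    ∫ x in Icc a b, max (t - x) 0 ∂μ = ∫ x in Icc a t, (t - x) ∂μ := by
  have hc : Continuous (fun x : ℝ => max (t - x) 0) :=
    (continuous_const.sub continuous_id).max continuous_const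
  have hdisj : Disjoint (Icc a t) (Ioc t b) := by
    rw [Set.disjoint_left]; rintro x ⟨_, hx⟩ ⟨hx2, _⟩; exact absurd hx (not_le.2 hx2)
  rw [← Icc_union_Ioc_eq_Icc h1 h2,
    setIntegral_union hdisj measurableSet_Ioc
      (intOn hc μ _ isCompact_Icc) ((intOn hc μ _ isCompact_Icc).mono_set Ioc_subset_Icc_self)]
  have h3 : ∫ x in Ioc t b, max (t - x) 0 ∂μ = 0 := by
    rw [setIntegral_congr_fun measurableSet_Ioc
      (fun x hx => max_eq_right (by linarith [hx.1] : t - x ≤ 0)), integral_zero]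
  rw [h3, add_zero]
  exact setIntegral_congr_fun measurableSet_Icc
    (fun x hx => max_eq_left (by linarith [hx.2] : (0:ℝ) ≤ t - x))

lemma intB (μ : Measure ℝ) [IsFiniteMeasure μ] {a b t : ℝ} (h1 : a ≤ t) (h2 : t ≤ b) :
    ∫ x in Icc a b, max (x - t) 0 ∂μ = ∫ x in Icc t b, (x - t) ∂μ := by
  have hc : Continuous (fun x : ℝ => max (x - t) 0) :=
    (continuous_id.sub continuous_const).max continuous_const
  have hdisj : Disjoint (Ico a t) (Icc t b) := by
    rw [Set.disjoint_left]; rintro x ⟨_, hx⟩ ⟨hx2, _⟩; exact absurd hx2 (not_le.2 hx)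
  rw [← Ico_union_Icc_eq_Icc h1 h2,
    setIntegral_union hdisj measurableSet_Icc
      ((intOn hc μ _ isCompact_Icc).mono_set Ico_subset_Icc_self) (intOn hc μ _ isCompact_Icc)]
  have h3 : ∫ x in Ico a t, max (x - t) 0 ∂μ = 0 := by
    rw [setIntegral_congr_fun measurableSet_Ico
      (fun x hx => max_eq_right (by linarith [hx.2] : x - t ≤ 0)), integral_zero]
  rw [h3, zero_add]
  exact setIntegral_congr_fun measurableSet_Icc
    (fun x hx => max_eq_left (by linarith [hx.1] : (0:ℝ) ≤ x - t))

open Finset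

namespace SPcore

def sp (s' : ℕ → ℝ) (i : ℕ) : ℝ := max (s' i) 0
def sm (s' : ℕ → ℝ) (i : ℕ) : ℝ := max (-(s' i)) 0
def pc (s' : ℕ → ℝ) : ℕ → ℝ := fun i => match i with
  | 0 => sp s' 0
  | (j+1) => sp s' (j+1) - sp s' j
def qc (s' : ℕ → ℝ) (i : ℕ) : ℝ := sm s' i - sm s' (i+1)

lemma sp_sub_sm (s' : ℕ → ℝ) (i : ℕ) : sp s' i - sm s' i = s' i := by
  unfold sp sm
  rcases le_total (s' i) 0 with h | h
  · rw [max_eq_right h, max_eq_left (by linarith)]; ring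
  · rw [max_eq_left h, max_eq_right (by linarith)]; ring

lemma sp_nonneg (s' : ℕ → ℝ) (i : ℕ) : 0 ≤ sp s' i := le_max_right _ _
lemma sm_nonneg (s' : ℕ → ℝ) (i : ℕ) : 0 ≤ sm s' i := le_max_right _ _

lemma pc_nonneg {s' : ℕ → ℝ} (h : Monotone s') (i : ℕ) : 0 ≤ pc s' i := by
  cases i with
  | zero => exact sp_nonneg s' 0
  | succ j =>
    have : sp s' j ≤ sp s' (j+1) := max_le_max (h (Nat.le_succ j)) le_rfl
    simpa [pc] using this

lemma qc_nonneg {s' : ℕ → ℝ} (h : Monotone s') (i : ℕ) : 0 ≤ qc s' i := by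
  have : sm s' (i+1) ≤ sm s' i :=
    max_le_max (neg_le_neg (h (Nat.le_succ i))) le_rfl
  simpa [qc] using this

lemma pc_sum (s' : ℕ → ℝ) (k : ℕ) : ∑ i ∈ range (k+1), pc s' i = sp s' k := by
  induction k with
  | zero => simp [pc]
  | succ j ih => rw [Finset.sum_range_succ, ih]; simp [pc]

lemma qc_sum (s' : ℕ → ℝ) (k : ℕ) : ∑ i ∈ range k, qc s' i = sm s' 0 - sm s' k := by
  induction k with
  | zero => simp
  | succ j ih => rw [Finset.sum_range_succ, ih]; simp [qc]

lemma qc_sum_Ico (s' : ℕ → ℝ) {k N : ℕ} (h : k ≤ N) :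
    ∑ i ∈ Finset.Ico k N, qc s' i = sm s' k - sm s' N := by
  rw [Finset.sum_Ico_eq_sub _ h, qc_sum, qc_sum]; ring

/-! ### the geometric layer -/

noncomputable def tt (a δ : ℝ) (i : ℕ) : ℝ := a + i * δ
noncomputable def sl (a δ : ℝ) (f : ℝ → ℝ) (i : ℕ) : ℝ := (f (tt a δ (i+1)) - f (tt a δ i)) / δ
noncomputable def scl (a δ : ℝ) (f : ℝ → ℝ) (N : ℕ) (i : ℕ) : ℝ :=
  if i < N then sl a δ f i else max (sl a δ f (N-1)) 0 + 1
noncomputable def mconst (a δ : ℝ) (f : ℝ → ℝ) (N : ℕ) : ℝ :=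
  f a - ∑ i ∈ range N, qc (scl a δ f N) i * ((i+1) * δ)
noncomputable def GG (a δ : ℝ) (f : ℝ → ℝ) (N : ℕ) : ℝ → ℝ := fun x =>
  mconst a δ f N + (∑ i ∈ range N, pc (scl a δ f N) i * max (x - tt a δ i) 0)
    + ∑ i ∈ range N, qc (scl a δ f N) i * max (tt a δ (i+1) - x) 0

variable {a δ : ℝ} {f : ℝ → ℝ} {N : ℕ}

lemma tt_mono (hδ : 0 < δ) : StrictMono (tt a δ) := fun i j hij => by
  unfold tt
  have : (i:ℝ) < j := by exact_mod_cast hij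
  nlinarith

lemma tt_le (hδ : 0 < δ) {i j : ℕ} (h : i ≤ j) : tt a δ i ≤ tt a δ j :=
  (tt_mono hδ).monotone h

lemma GG_cont : Continuous (GG a δ f N) := by
  unfold GG
  refine ((continuous_const.add (continuous_finset_sum _ fun i _ => ?_)).add
    (continuous_finset_sum _ fun i _ => ?_))
  · exact continuous_const.mul ((continuous_id.sub continuous_const).max continuous_const)
  · exact continuous_const.mul ((continuous_const.sub continuous_id).max continuous_const)

lemma scl_mono (hδ : 0 < δ) (hN : 0 < N)
    (hconvs : ∀ i, i + 1 < N → sl a δ f i ≤ sl a δ f (i+1)) :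
    Monotone (scl a δ f N) := by
  have key : ∀ i j, i ≤ j → j < N → sl a δ f i ≤ sl a δ f j := by
    intro i j hij hj
    induction j with
    | zero => have : i = 0 := Nat.le_zero.mp hij; simp [this]
    | succ k ih =>
      rcases Nat.lt_or_ge i (k+1) with h | h
      · exact (ih (Nat.lt_succ_iff.mp h) (Nat.lt_of_succ_lt hj)).trans (hconvs k hj)
      · have : i = k + 1 := le_antisymm hij h
        simp [this]
  apply monotone_nat_of_le_succ
  intro i
  unfold scl
  by_cases h1 : i + 1 < N
  · rw [if_pos (Nat.lt_of_succ_lt h1), if_pos h1]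
    exact hconvs i h1
  · by_cases h2 : i < N
    · rw [if_pos h2, if_neg h1]
      have hi : i = N - 1 := by omega
      calc sl a δ f i ≤ max (sl a δ f (N-1)) 0 := hi ▸ le_max_left _ _
        _ ≤ _ := by linarith
    · rw [if_neg h2, if_neg h1]

lemma sm_scl_top (i : ℕ) (h : N ≤ i) : sm (scl a δ f N) i = 0 := by
  unfold sm scl
  rw [if_neg (by omega)]
  apply max_eq_right
  have : (0:ℝ) ≤ max (sl a δ f (N-1)) 0 := le_max_right _ _
  linarith

/-- the fundamental "slide" identity on a subinterval -/
lemma GG_slide (hδ : 0 < δ) {k : ℕ} (hk : k < N) {x : ℝ}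
    (hx1 : tt a δ k ≤ x) (hx2 : x ≤ tt a δ (k+1)) :
    GG a δ f N x = GG a δ f N (tt a δ k) + scl a δ f N k * (x - tt a δ k) := by
  set s' := scl a δ f N with hs'
  have e1 : ∀ y : ℝ, tt a δ k ≤ y → y ≤ tt a δ (k+1) →
      ∑ i ∈ range N, pc s' i * max (y - tt a δ i) 0
        = ∑ i ∈ range (k+1), pc s' i * (y - tt a δ i) := by
    intro y hy1 hy2
    rw [← Finset.sum_range_add_sum_Ico _ (Nat.succ_le_of_lt hk)]
    have h0 : ∑ i ∈ Finset.Ico (k+1) N, pc s' i * max (y - tt a δ i) 0 = 0 := by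
      apply Finset.sum_eq_zero
      intro i hi
      have : y ≤ tt a δ i := hy2.trans (tt_le hδ (Finset.mem_Ico.mp hi).1)
      rw [max_eq_right (by linarith), mul_zero]
    rw [h0, add_zero]
    apply Finset.sum_congr rfl
    intro i hi
    have : tt a δ i ≤ y := (tt_le hδ (Nat.lt_succ_iff.mp (Finset.mem_range.mp hi))).trans hy1
    rw [max_eq_left (by linarith)]
  have e2 : ∀ y : ℝ, tt a δ k ≤ y → y ≤ tt a δ (k+1) →
      ∑ i ∈ range N, qc s' i * max (tt a δ (i+1) - y) 0
        = ∑ i ∈ Finset.Ico k N, qc s' i * (tt a δ (i+1) - y) := by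
    intro y hy1 hy2
    rw [Finset.range_eq_Ico, ← Finset.sum_Ico_consecutive _ (Nat.zero_le k) (le_of_lt hk)]
    have h0 : ∑ i ∈ Finset.Ico 0 k, qc s' i * max (tt a δ (i+1) - y) 0 = 0 := by
      apply Finset.sum_eq_zero
      intro i hi
      have : tt a δ (i+1) ≤ y :=
        (tt_le hδ (Nat.succ_le_of_lt (Finset.mem_Ico.mp hi).2)).trans hy1
      rw [max_eq_right (by linarith), mul_zero]
    rw [h0, zero_add]
    apply Finset.sum_congr rfl
    intro i hi
    have : y ≤ tt a δ (i+1) :=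
      hy2.trans (tt_le hδ (Nat.succ_le_succ (Finset.mem_Ico.mp hi).1))
    rw [max_eq_left (by linarith)]
  have hxx := e1 x hx1 hx2
  have hxk := e1 (tt a δ k) le_rfl (tt_le hδ (Nat.le_succ k))
  have hxx2 := e2 x hx1 hx2
  have hxk2 := e2 (tt a δ k) le_rfl (tt_le hδ (Nat.le_succ k))
  unfold GG
  rw [hxx, hxk, hxx2, hxk2]
  have d1 : ∑ i ∈ range (k+1), pc s' i * (x - tt a δ i)
      = (∑ i ∈ range (k+1), pc s' i * (tt a δ k - tt a δ i)) + sp s' k * (x - tt a δ k) := by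
    rw [← pc_sum s' k, Finset.sum_mul, ← Finset.sum_add_distrib]
    apply Finset.sum_congr rfl
    intro i _
    ring
  have d2 : ∑ i ∈ Finset.Ico k N, qc s' i * (tt a δ (i+1) - x)
      = (∑ i ∈ Finset.Ico k N, qc s' i * (tt a δ (i+1) - tt a δ k)) - sm s' k * (x - tt a δ k) := by
    rw [← sub_zero (sm s' k), ← sm_scl_top N le_rfl, ← hs', ← qc_sum_Ico s' (le_of_lt hk),
      Finset.sum_mul, ← Finset.sum_sub_distrib]
    apply Finset.sum_congr rfl
    intro i _
    ring
  rw [d1, d2]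
  linear_combination (x - tt a δ k) * sp_sub_sm s' k



lemma tt_zero : tt a δ 0 = a := by simp [tt]

lemma GG_nodes (hδ : 0 < δ) : ∀ k, k ≤ N → GG a δ f N (tt a δ k) = f (tt a δ k) := by
  intro k hk
  induction k with
  | zero =>
    rw [tt_zero]
    unfold GG
    have h1 : ∑ i ∈ range N, pc (scl a δ f N) i * max (a - tt a δ i) 0 = 0 := by
      apply Finset.sum_eq_zero
      intro i _
      have : a ≤ tt a δ i := by
        simp only [tt]
        have : (0:ℝ) ≤ (i:ℝ) * δ := by positivity
        linarith
      rw [max_eq_right (by linarith), mul_zero]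
    have h2 : ∀ i ∈ range N, qc (scl a δ f N) i * max (tt a δ (i+1) - a) 0
        = qc (scl a δ f N) i * ((i+1) * δ) := by
      intro i _
      have h3 : tt a δ (i+1) - a = (i+1) * δ := by simp [tt]
      rw [h3, max_eq_left (by positivity)]
    rw [h1, Finset.sum_congr rfl h2]
    unfold mconst
    push_cast
    ring
  | succ j ih =>
    have hjN : j < N := hk
    have hs : GG a δ f N (tt a δ (j+1))
        = GG a δ f N (tt a δ j) + scl a δ f N j * (tt a δ (j+1) - tt a δ j) :=
      GG_slide hδ hjN (tt_le hδ (Nat.le_succ j)) le_rfl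
    have hdiff : tt a δ (j+1) - tt a δ j = δ := by simp [tt]; ring
    rw [hs, hdiff, ih (le_of_lt hjN)]
    unfold scl
    rw [if_pos hjN]
    unfold sl
    field_simp
    ring

lemma mconst_nonneg (hδ : 0 < δ) (hN : 0 < N)
    (hconvs : ∀ i, i + 1 < N → sl a δ f i ≤ sl a δ f (i+1))
    (hpos : ∀ k, k ≤ N → 0 ≤ f (tt a δ k)) :
    0 ≤ mconst a δ f N := by
  classical
  set s' := scl a δ f N with hs'
  have hmono : Monotone s' := scl_mono hδ hN hconvs
  have hex : ∃ k, N ≤ k ∨ 0 ≤ sl a δ f k := ⟨N, Or.inl le_rfl⟩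
  set k₀ := Nat.find hex with hk₀def
  have hk₀N : k₀ ≤ N := Nat.find_min' hex (Or.inl le_rfl)
  have hlt : ∀ i, i < k₀ → i < N ∧ sl a δ f i < 0 := by
    intro i hi
    have := Nat.find_min hex hi
    push_neg at this
    exact ⟨this.1, this.2⟩
  have hsp0 : ∀ i, i < k₀ → sp s' i = 0 := by
    intro i hi
    obtain ⟨h1, h2⟩ := hlt i hi
    unfold s'
    unfold sp scl
    rw [if_pos h1]
    exact max_eq_right (le_of_lt h2)
  have hsm0 : ∀ j, k₀ ≤ j → sm s' j = 0 := by
    intro j hj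
    rcases Nat.lt_or_ge j N with hjN | hjN
    · have hk₀lt : k₀ < N := lt_of_le_of_lt hj hjN
      have hspec := Nat.find_spec hex
      rw [← hk₀def] at hspec
      have h0 : 0 ≤ sl a δ f k₀ := hspec.resolve_left (by omega)
      have h1 : s' k₀ ≤ s' j := hmono hj
      have h2 : 0 ≤ s' j := by
        have : s' k₀ = sl a δ f k₀ := by unfold s'; unfold scl; rw [if_pos hk₀lt]
        linarith
      unfold s'; unfold sm
      rw [max_eq_right (by unfold s' at h2; linarith)]
    · exact sm_scl_top j hjN
  have hval : GG a δ f N (tt a δ k₀) = mconst a δ f N := by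
    unfold GG
    have h1 : ∑ i ∈ range N, pc s' i * max (tt a δ k₀ - tt a δ i) 0 = 0 := by
      apply Finset.sum_eq_zero
      intro i _
      rcases Nat.lt_or_ge i k₀ with h | h
      · have hpc : pc s' i = 0 := by
          cases i with
          | zero => simpa [pc] using hsp0 0 h
          | succ j =>
            have e1 := hsp0 (j+1) h
            have e2 := hsp0 j (Nat.lt_of_succ_lt h)
            simp [pc, e1, e2]
        rw [hpc, zero_mul]
      · have : tt a δ k₀ ≤ tt a δ i := tt_le hδ h
        rw [max_eq_right (by linarith), mul_zero]
    have h2 : ∑ i ∈ range N, qc s' i * max (tt a δ (i+1) - tt a δ k₀) 0 = 0 := by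
      apply Finset.sum_eq_zero
      intro i _
      rcases Nat.lt_or_ge i k₀ with h | h
      · have : tt a δ (i+1) ≤ tt a δ k₀ := tt_le hδ (Nat.succ_le_of_lt h)
        rw [max_eq_right (by linarith), mul_zero]
      · have hqc : qc s' i = 0 := by
          have e1 := hsm0 i h
          have e2 := hsm0 (i+1) (le_trans h (Nat.le_succ i))
          simp [qc, e1, e2]
        rw [hqc, zero_mul]
    rw [h1, h2]
    ring
  rw [← hval, GG_nodes hδ k₀ hk₀N]
  exact hpos k₀ hk₀N

open MeasureTheory Set in
lemma GG_integral (μ : Measure ℝ) [IsFiniteMeasure μ] (A B : ℝ) :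
    ∫ x in Set.Icc A B, GG a δ f N x ∂μ
      = mconst a δ f N * (μ (Set.Icc A B)).toReal
        + (∑ i ∈ range N, pc (scl a δ f N) i * ∫ x in Set.Icc A B, max (x - tt a δ i) 0 ∂μ)
        + ∑ i ∈ range N, qc (scl a δ f N) i * ∫ x in Set.Icc A B, max (tt a δ (i+1) - x) 0 ∂μ := by
  have hc1 : ∀ i : ℕ, Continuous (fun x : ℝ => pc (scl a δ f N) i * max (x - tt a δ i) 0) :=
    fun i => continuous_const.mul ((continuous_id.sub continuous_const).max continuous_const)
  have hc2 : ∀ i : ℕ, Continuous (fun x : ℝ => qc (scl a δ f N) i * max (tt a δ (i+1) - x) 0) :=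
    fun i => continuous_const.mul ((continuous_const.sub continuous_id).max continuous_const)
  have hS1 : Continuous (fun x : ℝ => ∑ i ∈ range N, pc (scl a δ f N) i * max (x - tt a δ i) 0) :=
    continuous_finset_sum _ fun i _ => hc1 i
  have hS2 : Continuous (fun x : ℝ => ∑ i ∈ range N, qc (scl a δ f N) i * max (tt a δ (i+1) - x) 0) :=
    continuous_finset_sum _ fun i _ => hc2 i
  have int0 : IntegrableOn (fun _ : ℝ => mconst a δ f N) (Set.Icc A B) μ :=
    integrableOn_const (measure_lt_top μ _).ne
  have int1 : IntegrableOn (fun x : ℝ => ∑ i ∈ range N, pc (scl a δ f N) i * max (x - tt a δ i) 0)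
      (Set.Icc A B) μ := hS1.continuousOn.integrableOn_compact isCompact_Icc
  have int2 : IntegrableOn (fun x : ℝ => ∑ i ∈ range N, qc (scl a δ f N) i * max (tt a δ (i+1) - x) 0)
      (Set.Icc A B) μ := hS2.continuousOn.integrableOn_compact isCompact_Icc
  unfold GG
  have I1 : Integrable (fun x : ℝ => mconst a δ f N
      + ∑ i ∈ range N, pc (scl a δ f N) i * max (x - tt a δ i) 0) (μ.restrict (Set.Icc A B)) :=
    int0.add int1
  have e1 := integral_add I1 int2
  have e2 := integral_add int0 int1
  have e3 := integral_finset_sum (μ := μ.restrict (Set.Icc A B)) (range N)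
    (f := fun i (x : ℝ) => pc (scl a δ f N) i * max (x - tt a δ i) 0)
    (fun i _ => (hc1 i).continuousOn.integrableOn_compact isCompact_Icc)
  have e4 := integral_finset_sum (μ := μ.restrict (Set.Icc A B)) (range N)
    (f := fun i (x : ℝ) => qc (scl a δ f N) i * max (tt a δ (i+1) - x) 0)
    (fun i _ => (hc2 i).continuousOn.integrableOn_compact isCompact_Icc)
  have e5 : ∀ i ∈ range N, ∫ x in Set.Icc A B, pc (scl a δ f N) i * max (x - tt a δ i) 0 ∂μ
      = pc (scl a δ f N) i * ∫ x in Set.Icc A B, max (x - tt a δ i) 0 ∂μ :=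
    fun i _ => integral_const_mul _ _
  have e6 : ∀ i ∈ range N, ∫ x in Set.Icc A B, qc (scl a δ f N) i * max (tt a δ (i+1) - x) 0 ∂μ
      = qc (scl a δ f N) i * ∫ x in Set.Icc A B, max (tt a δ (i+1) - x) 0 ∂μ :=
    fun i _ => integral_const_mul _ _
  rw [e1, e2, e3, e4, setIntegral_const, Finset.sum_congr rfl e5, Finset.sum_congr rfl e6,
    smul_eq_mul, mul_comm, measureReal_def]

end SPcore

open MeasureTheory Set SPcore Finset

lemma SP_key (a b : ℝ) (hab : a < b)
    (μ₁ μ₂ : Measure ℝ) [IsFiniteMeasure μ₁] [IsFiniteMeasure μ₂]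
    (hmass : 0 < (μ₁ (Set.Icc a b)).toReal - (μ₂ (Set.Icc a b)).toReal)
    (hend1 : ∀ t ∈ Set.Icc a b,
      0 ≤ (∫ x in Set.Icc a b, max (t - x) 0 ∂μ₁) - ∫ x in Set.Icc a b, max (t - x) 0 ∂μ₂)
    (hend2 : ∀ t ∈ Set.Icc a b,
      0 ≤ (∫ x in Set.Icc a b, max (x - t) 0 ∂μ₁) - ∫ x in Set.Icc a b, max (x - t) 0 ∂μ₂)
    (f : ℝ → ℝ) (hconv : ConvexOn ℝ (Set.Icc a b) f)
    (hpos : ∀ x ∈ Set.Icc a b, 0 ≤ f x)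
    (N : ℕ) (hN : 0 < N) (ε : ℝ)
    (hω : ∀ x ∈ Set.Icc a b, ∀ y ∈ Set.Icc a b, |x - y| ≤ (b - a)/N → |f x - f y| ≤ ε) :
    ∃ G : ℝ → ℝ, Continuous G ∧
      (0 ≤ (∫ x in Set.Icc a b, G x ∂μ₁) - ∫ x in Set.Icc a b, G x ∂μ₂) ∧
      ∀ x ∈ Set.Icc a b, |f x - G x| ≤ 2 * ε := by
  set δ : ℝ := (b - a) / N with hδdef
  have hNR : (0:ℝ) < N := Nat.cast_pos.mpr hN
  have hδ : 0 < δ := div_pos (by linarith) hNR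
  have htN : tt a δ N = b := by
    unfold tt
    rw [hδdef]
    field_simp
    ring
  have httIcc : ∀ i : ℕ, i ≤ N → tt a δ i ∈ Set.Icc a b := by
    intro i hi
    constructor
    · unfold tt
      have : (0:ℝ) ≤ (i:ℝ) * δ := by positivity
      linarith
    · rw [← htN]
      exact tt_le hδ hi
  have hdiffδ : ∀ i : ℕ, tt a δ (i+1) - tt a δ i = δ := by
    intro i; unfold tt; push_cast; ring
  have hconvs : ∀ i, i + 1 < N → sl a δ f i ≤ sl a δ f (i+1) := by
    intro i hi
    have hmid : (1/2 : ℝ) • tt a δ i + (1/2 : ℝ) • tt a δ (i+2) = tt a δ (i+1) := by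
      unfold tt
      push_cast
      simp only [smul_eq_mul]
      ring
    have hmi := hconv.2 (httIcc i (by omega)) (httIcc (i+2) (by omega))
      (by norm_num : (0:ℝ) ≤ 1/2) (by norm_num : (0:ℝ) ≤ 1/2) (by norm_num)
    rw [hmid] at hmi
    simp only [smul_eq_mul] at hmi
    unfold sl
    rw [div_le_div_iff_of_pos_right hδ]
    linarith
  refine ⟨GG a δ f N, GG_cont, ?_, ?_⟩
  · have hmono := scl_mono hδ hN hconvs
    have hm := mconst_nonneg hδ hN hconvs (fun k hk => hpos _ (httIcc k hk))
    rw [GG_integral μ₁ a b, GG_integral μ₂ a b]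
    have hre : ∀ S₁ S₂ T₁ T₂ M₁ M₂ : ℝ,
        (mconst a δ f N * M₁ + S₁ + T₁) - (mconst a δ f N * M₂ + S₂ + T₂)
          = mconst a δ f N * (M₁ - M₂) + (S₁ - S₂) + (T₁ - T₂) := by intros; ring
    rw [hre]
    have hsub : ∀ (c g₁ g₂ : ℕ → ℝ),
        (∑ i ∈ range N, c i * g₁ i) - ∑ i ∈ range N, c i * g₂ i
          = ∑ i ∈ range N, c i * (g₁ i - g₂ i) := by
      intro c g₁ g₂
      rw [← Finset.sum_sub_distrib]
      exact Finset.sum_congr rfl fun i _ => by ring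
    rw [hsub (fun i => pc (scl a δ f N) i), hsub (fun i => qc (scl a δ f N) i)]
    have h1 : 0 ≤ ∑ i ∈ range N, pc (scl a δ f N) i
        * ((∫ x in Set.Icc a b, max (x - tt a δ i) 0 ∂μ₁)
          - ∫ x in Set.Icc a b, max (x - tt a δ i) 0 ∂μ₂) := by
      apply Finset.sum_nonneg
      intro i hi
      exact mul_nonneg (pc_nonneg hmono i)
        (hend2 _ (httIcc i (le_of_lt (Finset.mem_range.mp hi))))
    have h2 : 0 ≤ ∑ i ∈ range N, qc (scl a δ f N) i
        * ((∫ x in Set.Icc a b, max (tt a δ (i+1) - x) 0 ∂μ₁)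
          - ∫ x in Set.Icc a b, max (tt a δ (i+1) - x) 0 ∂μ₂) := by
      apply Finset.sum_nonneg
      intro i hi
      exact mul_nonneg (qc_nonneg hmono i)
        (hend1 _ (httIcc (i+1) (Finset.mem_range.mp hi)))
    have h0 : 0 ≤ mconst a δ f N * ((μ₁ (Set.Icc a b)).toReal - (μ₂ (Set.Icc a b)).toReal) :=
      mul_nonneg hm (le_of_lt hmass)
    linarith
  · intro x hx
    set k : ℕ := min (Nat.floor ((x - a)/δ)) (N-1) with hkdef
    have hkN : k < N := lt_of_le_of_lt (min_le_right _ _) (by omega)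
    have ht1 : tt a δ k ≤ x := by
      have h1 : (k:ℝ) ≤ (x - a)/δ := by
        have h2 : (k:ℝ) ≤ (Nat.floor ((x - a)/δ) : ℝ) := Nat.cast_le.mpr (min_le_left _ _)
        exact h2.trans (Nat.floor_le (div_nonneg (by linarith [hx.1]) hδ.le))
      have h3 : (k:ℝ) * δ ≤ x - a := (le_div_iff₀ hδ).mp h1
      unfold tt
      linarith
    have ht2 : x ≤ tt a δ (k+1) := by
      rcases le_or_gt (Nat.floor ((x - a)/δ)) (N-1) with h | h
      · have hk : k = Nat.floor ((x - a)/δ) := min_eq_left h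
        have h4 : (x - a)/δ < k + 1 := by
          rw [hk]
          exact Nat.lt_floor_add_one _
        have h5 : x - a < ((k:ℝ) + 1) * δ := by
          rw [div_lt_iff₀ hδ] at h4
          linarith
        unfold tt
        push_cast
        linarith
      · have hk : k = N - 1 := min_eq_right (le_of_lt h)
        have : k + 1 = N := by omega
        rw [this, htN]
        exact hx.2
    have hslide := GG_slide (f := f) hδ hkN ht1 ht2
    rw [GG_nodes hδ k hkN.le] at hslide
    have hscl : scl a δ f N k = (f (tt a δ (k+1)) - f (tt a δ k)) / δ := by
      unfold scl
      rw [if_pos hkN]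
      rfl
    have hxk : |x - tt a δ k| ≤ δ := by
      rw [abs_le]
      constructor
      · linarith
      · have := hdiffδ k
        linarith
    have hb1 : |f x - f (tt a δ k)| ≤ ε := hω x hx _ (httIcc k hkN.le) hxk
    have hb2 : |f (tt a δ (k+1)) - f (tt a δ k)| ≤ ε := by
      apply hω _ (httIcc (k+1) hkN) _ (httIcc k hkN.le)
      rw [hdiffδ k, abs_of_pos hδ]
    have hb2' : |scl a δ f N k * (x - tt a δ k)| ≤ ε := by
      rw [hscl, abs_mul, abs_div, abs_of_pos hδ]
      calc |f (tt a δ (k+1)) - f (tt a δ k)| / δ * |x - tt a δ k|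
          ≤ |f (tt a δ (k+1)) - f (tt a δ k)| / δ * δ := by
            gcongr
        _ = |f (tt a δ (k+1)) - f (tt a δ k)| := by field_simp
        _ ≤ ε := hb2
    calc |f x - GG a δ f N x|
        = |(f x - f (tt a δ k)) - scl a δ f N k * (x - tt a δ k)| := by
          rw [hslide]
          congr 1
          ring
      _ ≤ |f x - f (tt a δ k)| + |scl a δ f N k * (x - tt a δ k)| := abs_sub _ _
      _ ≤ ε + ε := add_le_add hb1 hb2'
      _ = 2 * ε := by ring

/-- Lemma (Popoviciu–Fink): a real Borel measure `μ = μ₁ - μ₂` on `[a, b]` with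
`μ([a, b]) > 0` is a Steffensen–Popoviciu measure (i.e. `∫ f dμ ≥ 0` for every
continuous convex `f : [a, b] → [0, ∞)`) if and only if it satisfies the
endpoints-positivity conditions `∫_a^t (t - x) dμ ≥ 0` and `∫_t^b (x - t) dμ ≥ 0`
for every `t ∈ [a, b]`. Here the signed measure is represented as the difference
of two finite Borel measures `μ₁`, `μ₂` carried by `[a, b]`. -/
theorem steffensen_popoviciu_iff_endpoints_positivity
    (a b : ℝ) (hab : a ≤ b)
    (μ₁ μ₂ : Measure ℝ) [IsFiniteMeasure μ₁] [IsFiniteMeasure μ₂]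
    (hμ₁ : μ₁ (Set.Icc a b)ᶜ = 0) (hμ₂ : μ₂ (Set.Icc a b)ᶜ = 0)
    (hmass : 0 < (μ₁ (Set.Icc a b)).toReal - (μ₂ (Set.Icc a b)).toReal) :
    (∀ f : ℝ → ℝ, ContinuousOn f (Set.Icc a b) → ConvexOn ℝ (Set.Icc a b) f →
        (∀ x ∈ Set.Icc a b, 0 ≤ f x) →
        0 ≤ (∫ x in Set.Icc a b, f x ∂μ₁) - ∫ x in Set.Icc a b, f x ∂μ₂) ↔
      (∀ t ∈ Set.Icc a b,
        0 ≤ (∫ x in Set.Icc a t, (t - x) ∂μ₁) - (∫ x in Set.Icc a t, (t - x) ∂μ₂) ∧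
        0 ≤ (∫ x in Set.Icc t b, (x - t) ∂μ₁) - ∫ x in Set.Icc t b, (x - t) ∂μ₂) := by
  constructor
  · intro hSP t ht
    constructor
    · have hc : ContinuousOn (fun x : ℝ => max (t - x) 0) (Set.Icc a b) :=
        ((continuous_const.sub continuous_id).max continuous_const).continuousOn
      have h := hSP (fun x => max (t - x) 0) hc (convexOn_maxSub (convex_Icc a b) t)
        (fun x _ => le_max_right _ _)
      rwa [intA μ₁ ht.1 ht.2, intA μ₂ ht.1 ht.2] at h
    · have hc : ContinuousOn (fun x : ℝ => max (x - t) 0) (Set.Icc a b) :=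
        ((continuous_id.sub continuous_const).max continuous_const).continuousOn
      have h := hSP (fun x => max (x - t) 0) hc (convexOn_subMax (convex_Icc a b) t)
        (fun x _ => le_max_right _ _)
      rwa [intB μ₁ ht.1 ht.2, intB μ₂ ht.1 ht.2] at h
  · intro hend f hf hconv hpos
    rcases eq_or_lt_of_le hab with heq | hlt
    · subst heq
      rw [Set.Icc_self] at hmass ⊢
      rw [integral_singleton, integral_singleton]
      have hfa : 0 ≤ f a := hpos a (by simp)
      simp only [smul_eq_mul, measureReal_def]
      nlinarith [hmass, hfa]
    · have hend1 : ∀ t ∈ Set.Icc a b,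
          0 ≤ (∫ x in Set.Icc a b, max (t - x) 0 ∂μ₁)
            - ∫ x in Set.Icc a b, max (t - x) 0 ∂μ₂ := by
        intro t ht
        rw [intA μ₁ ht.1 ht.2, intA μ₂ ht.1 ht.2]
        exact (hend t ht).1
      have hend2 : ∀ t ∈ Set.Icc a b,
          0 ≤ (∫ x in Set.Icc a b, max (x - t) 0 ∂μ₁)
            - ∫ x in Set.Icc a b, max (x - t) 0 ∂μ₂ := by
        intro t ht
        rw [intB μ₁ ht.1 ht.2, intB μ₂ ht.1 ht.2]
        exact (hend t ht).2
      by_contra hneg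
      push_neg at hneg
      set I1 := ∫ x in Set.Icc a b, f x ∂μ₁ with hI1
      set I2 := ∫ x in Set.Icc a b, f x ∂μ₂ with hI2
      set C : ℝ := (μ₁ (Set.Icc a b)).toReal + (μ₂ (Set.Icc a b)).toReal + 1 with hC
      have hM1 : (0:ℝ) ≤ (μ₁ (Set.Icc a b)).toReal := ENNReal.toReal_nonneg
      have hM2 : (0:ℝ) ≤ (μ₂ (Set.Icc a b)).toReal := ENNReal.toReal_nonneg
      have hCpos : 0 < C := by rw [hC]; linarith
      set ε : ℝ := (I2 - I1) / (8 * C) with hεdef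
      have hI21 : 0 < I2 - I1 := by linarith
      have hε : 0 < ε := div_pos hI21 (by linarith)
      have hu := isCompact_Icc.uniformContinuousOn_of_continuous hf
      rw [Metric.uniformContinuousOn_iff] at hu
      obtain ⟨δ₀, hδ₀, hu⟩ := hu ε hε
      set N : ℕ := Nat.ceil ((b - a)/δ₀) + 1 with hNdef
      have hN0 : 0 < N := Nat.succ_pos _
      have hNR : (0:ℝ) < (N:ℝ) := Nat.cast_pos.mpr hN0
      have hδN : (b - a)/N < δ₀ := by
        have h1 : (b - a)/δ₀ ≤ (Nat.ceil ((b-a)/δ₀) : ℝ) := Nat.le_ceil _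
        have h2 : ((Nat.ceil ((b-a)/δ₀) : ℕ) : ℝ) < (N:ℝ) := by
          rw [hNdef]; push_cast; linarith
        have h3 : (b - a) / δ₀ < (N:ℝ) := lt_of_le_of_lt h1 h2
        rw [div_lt_iff₀ hδ₀] at h3
        rw [div_lt_iff₀ hNR]
        nlinarith
      have hω : ∀ x ∈ Set.Icc a b, ∀ y ∈ Set.Icc a b,
          |x - y| ≤ (b - a)/N → |f x - f y| ≤ ε := by
        intro x hx y hy hxy
        have h := hu x hx y hy (by rw [Real.dist_eq]; exact lt_of_le_of_lt hxy hδN)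
        rw [Real.dist_eq] at h
        exact h.le
      obtain ⟨G, hGc, hGpos, hGapprox⟩ :=
        SP_key a b hlt μ₁ μ₂ hmass hend1 hend2 f hconv hpos N hN0 ε hω
      have k1 : |I1 - ∫ x in Set.Icc a b, G x ∂μ₁| ≤ 2 * ε * (μ₁ (Set.Icc a b)).toReal := by
        rw [hI1, ← integral_sub (hf.integrableOn_compact isCompact_Icc)
          (hGc.continuousOn.integrableOn_compact isCompact_Icc)]
        have h := norm_setIntegral_le_of_norm_le_const (μ := μ₁) (s := Set.Icc a b) (C := 2*ε)
          (measure_lt_top μ₁ _) (fun x hx => by rw [Real.norm_eq_abs]; exact hGapprox x hx)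
        rwa [Real.norm_eq_abs, measureReal_def] at h
      have k2 : |I2 - ∫ x in Set.Icc a b, G x ∂μ₂| ≤ 2 * ε * (μ₂ (Set.Icc a b)).toReal := by
        rw [hI2, ← integral_sub (hf.integrableOn_compact isCompact_Icc)
          (hGc.continuousOn.integrableOn_compact isCompact_Icc)]
        have h := norm_setIntegral_le_of_norm_le_const (μ := μ₂) (s := Set.Icc a b) (C := 2*ε)
          (measure_lt_top μ₂ _) (fun x hx => by rw [Real.norm_eq_abs]; exact hGapprox x hx)
        rwa [Real.norm_eq_abs, measureReal_def] at h
      have e1 := (abs_le.mp k1).1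
      have e2 := (abs_le.mp k2).2
      have hb1 : 2 * ε * (μ₁ (Set.Icc a b)).toReal ≤ 2 * ε * C := by nlinarith
      have hb2 : 2 * ε * (μ₂ (Set.Icc a b)).toReal ≤ 2 * ε * C := by nlinarith
      have hεC : ε * C = (I2 - I1) / 8 := by
        rw [hεdef]
        field_simp
      linarith
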